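/- Fix α > 0, m, d, n ∈ ℕ. The map that sends a data set D = ((x^1, …, x^m), 𝕐) ∈ (ℝ^d)^m × ℝ^{m×n} to the solution u_𝕏 = (α I + M_𝕏)^{−1} M_𝕏 𝕐 of the finite linear system, where M_𝕏 is the kernel matrix with entries (M_𝕏)_{ij} = exp(−2π|x^i − x^j|), is well defined and continuous on all of (ℝ^d)^m × ℝ^{m×n}. -/

import Mathlib

open Real

noncomputable section

/-- The kernel matrix `M_𝕏` with entries `(M_𝕏)_{ij} = exp(-2π|xⁱ - xʲ|)`. -/
def kernelMatrix (d m : ℕ) (x : Fin m → EuclideanSpace ℝ (Fin d)) :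
    Matrix (Fin m) (Fin m) ℝ :=
  Matrix.of fun i j => Real.exp (-(2 * π) * ‖x i - x j‖)

open Set MeasureTheory


open Finset Nat RealInnerProductSpace in
lemma sos {m : ℕ} {ι : Type*} [Fintype ι] (g : Fin m → ι → ℝ) (v : Fin m → ℝ) :
    0 ≤ ∑ i, ∑ j, v i * v j * (∑ a, g i a * g j a) := by
  have h : ∑ i, ∑ j, v i * v j * (∑ a, g i a * g j a)
      = ∑ a, (∑ i, v i * g i a) ^ 2 :=
    calc ∑ i, ∑ j, v i * v j * (∑ a, g i a * g j a)
        = ∑ i, ∑ a, ∑ j, (v i * g i a) * (v j * g j a) := Finset.sum_congr rfl fun i _ => by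
          simp_rw [Finset.mul_sum]
          rw [Finset.sum_comm]
          exact Finset.sum_congr rfl fun a _ => Finset.sum_congr rfl fun j _ => by ring
      _ = ∑ a, ∑ i, ∑ j, (v i * g i a) * (v j * g j a) := Finset.sum_comm
      _ = ∑ a, (∑ i, v i * g i a) ^ 2 := Finset.sum_congr rfl fun a _ => by
          rw [sq, Finset.sum_mul_sum]
  rw [h]
  exact Finset.sum_nonneg fun a _ => sq_nonneg _

set_option maxHeartbeats 1000000 in
open Finset Nat RealInnerProductSpace in
lemma gauss_psd {m d : ℕ} (c : ℝ) (hc : 0 ≤ c) (y : Fin m → EuclideanSpace ℝ (Fin d))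
    (v : Fin m → ℝ) :
    0 ≤ ∑ i, ∑ j, v i * v j * Real.exp (-c * ‖y i - y j‖ ^ 2) := by
  classical
  obtain ⟨D, hD⟩ : ∃ D : Fin m → ℝ, ∀ i, D i = Real.exp (-c * ‖y i‖ ^ 2) :=
    ⟨_, fun _ => rfl⟩
  have key : ∀ i j, Real.exp (-c * ‖y i - y j‖ ^ 2)
      = ∑' k : ℕ, D i * D j * ((2 * c * ⟪y i, y j⟫) ^ k / (k)!) := by
    intro i j
    have h1 : -c * ‖y i - y j‖ ^ 2
        = -c * ‖y i‖ ^ 2 + -c * ‖y j‖ ^ 2 + 2 * c * ⟪y i, y j⟫ := by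
      rw [norm_sub_sq_real]; ring
    rw [h1, Real.exp_add, Real.exp_add, ← hD i, ← hD j]
    have h2 : Real.exp (2 * c * ⟪y i, y j⟫)
        = ∑' k : ℕ, (2 * c * ⟪y i, y j⟫) ^ k / (k)! := by
      rw [Real.exp_eq_exp_ℝ, NormedSpace.exp_eq_tsum_div]
    rw [h2, ← tsum_mul_left]
  have hsummable : ∀ i j : Fin m, Summable
      (fun k : ℕ => v i * v j * (D i * D j * ((2 * c * ⟪y i, y j⟫) ^ k / (k)!))) :=
    fun i j => ((Real.summable_pow_div_factorial _).mul_left _).mul_left _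
  calc (0:ℝ) ≤ ∑' k : ℕ, ∑ p : Fin m × Fin m,
        v p.1 * v p.2 * (D p.1 * D p.2 * ((2 * c * ⟪y p.1, y p.2⟫) ^ k / (k)!)) := by
        apply tsum_nonneg
        intro k
        have hptw : ∀ p : Fin m × Fin m,
            v p.1 * v p.2 * (D p.1 * D p.2 * ((2 * c * ⟪y p.1, y p.2⟫) ^ k / (k)!))
            = ((2*c)^k / (k)!) * (v p.1 * v p.2 *
              (∑ f : Fin k → Fin d, (D p.1 * ∏ t, y p.1 (f t)) * (D p.2 * ∏ t, y p.2 (f t)))) := by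
          intro p
          have hinner : ⟪y p.1, y p.2⟫ = ∑ a, y p.1 a * y p.2 a := by
            simp [PiLp.inner_apply, RCLike.inner_apply, conj_trivial]
            exact Finset.sum_congr rfl fun _ _ => mul_comm _ _
          rw [hinner, mul_pow, Finset.sum_pow']
          simp only [Fintype.piFinset_univ, Finset.sum_div, Finset.mul_sum]
          apply Finset.sum_congr rfl; intro f _
          rw [Finset.prod_mul_distrib]
          ring
        have hrw : ∑ p : Fin m × Fin m,
            v p.1 * v p.2 * (D p.1 * D p.2 * ((2 * c * ⟪y p.1, y p.2⟫) ^ k / (k)!))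
            = ((2*c)^k / (k)!) * ∑ p : Fin m × Fin m, (v p.1 * v p.2 *
              (∑ f : Fin k → Fin d, (D p.1 * ∏ t, y p.1 (f t)) * (D p.2 * ∏ t, y p.2 (f t)))) := by
          rw [Finset.mul_sum]
          exact Finset.sum_congr rfl fun p _ => hptw p
        rw [hrw]
        apply mul_nonneg (by positivity)
        rw [Fintype.sum_prod_type]
        exact sos (ι := Fin k → Fin d) (fun i f => D i * ∏ t, y i (f t)) v
    _ = ∑ p : Fin m × Fin m, ∑' k : ℕ,
        v p.1 * v p.2 * (D p.1 * D p.2 * ((2 * c * ⟪y p.1, y p.2⟫) ^ k / (k)!)) :=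
        Summable.tsum_finsetSum fun p _ => hsummable p.1 p.2
    _ = ∑ i, ∑ j, v i * v j * Real.exp (-c * ‖y i - y j‖ ^ 2) := by
        rw [Fintype.sum_prod_type]
        apply Finset.sum_congr rfl; intro i _
        apply Finset.sum_congr rfl; intro j _
        rw [key i j, tsum_mul_left]


lemma glasser {a : ℝ} (ha : 0 < a) :
    ∫ s in Ioi (0:ℝ), Real.exp (-(s - a/(2*s))^2) = Real.sqrt π / 2 := by
  set g : ℝ → ℝ := fun u => Real.exp (-(u - a/(2*u))^2) with hg
  -- continuity on Ioi 0
  have hgc : ContinuousOn g (Ioi 0) := by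
    apply Real.continuous_exp.comp_continuousOn
    apply ContinuousOn.neg
    apply ContinuousOn.pow
    exact continuousOn_id.sub (continuousOn_const.div
      (continuousOn_const.mul continuousOn_id) (fun s hs => by
        have hs' : (0:ℝ) < s := hs
        positivity))
  -- integrability of g on Ioi 0
  have hgi : IntegrableOn g (Ioi 0) := by
    apply Integrable.mono' (g := fun s => Real.exp a * Real.exp (-1 * s^2))
    · exact (((integrable_exp_neg_mul_sq one_pos).const_mul _)).integrableOn
    · exact hgc.aestronglyMeasurable measurableSet_Ioi
    · refine (ae_restrict_iff' measurableSet_Ioi).mpr (ae_of_all _ fun s hs => ?_)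
      have hs' : (0:ℝ) < s := hs
      rw [Real.norm_eq_abs, abs_of_pos (Real.exp_pos _), ← Real.exp_add]
      apply Real.exp_le_exp.mpr
      have hsa : s * (a/(2*s)) * 2 = a := by field_simp
      nlinarith [sq_nonneg (a/(2*s))]
  -- substitution s ↦ a/(2s)
  have himg1 : (fun s : ℝ => a/(2*s)) '' (Ioi 0) = Ioi 0 := by
    ext u
    constructor
    · rintro ⟨s, hs, rfl⟩
      have : (0:ℝ) < s := hs
      exact mem_Ioi.mpr (by positivity)
    · intro hu
      have hu' : (0:ℝ) < u := hu
      exact ⟨a/(2*u), mem_Ioi.mpr (by positivity), by field_simp⟩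
  have hd1 : ∀ s ∈ Ioi (0:ℝ), HasDerivWithinAt (fun s : ℝ => a/(2*s))
      (-(a/2) / s^2) (Ioi 0) s := by
    intro s hs
    have hs' : (0:ℝ) < s := hs
    have : HasDerivAt (fun s : ℝ => a/(2*s)) (-(a/2) / s^2) s := by
      have h1 : HasDerivAt (fun s : ℝ => s⁻¹) (-(s^2)⁻¹) s := hasDerivAt_inv hs'.ne'
      have h2 := h1.const_mul (a/2)
      have e1 : (fun s : ℝ => a/(2*s)) = fun y => a / 2 * y⁻¹ := by funext t; ring
      have e2 : -(a/2) / s^2 = a / 2 * -(s ^ 2)⁻¹ := by ring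
      rw [e1, e2]; exact h2
    exact this.hasDerivWithinAt
  have hinj1 : InjOn (fun s : ℝ => a/(2*s)) (Ioi 0) := by
    intro s hs t ht h
    have hs' : (0:ℝ) < s := hs
    have ht' : (0:ℝ) < t := ht
    have h0 : a/(2*s) = a/(2*t) := h
    calc s = a/(2*(a/(2*s))) := by field_simp
      _ = a/(2*(a/(2*t))) := by rw [h0]
      _ = t := by field_simp
  -- substitution identity 1
  have hsub1 := integral_image_eq_integral_abs_deriv_smul measurableSet_Ioi hd1 hinj1 g
  rw [himg1] at hsub1
  have heq1 : ∀ s ∈ Ioi (0:ℝ), |(-(a/2) / s^2)| • g (a/(2*s)) = (a/(2*s^2)) * g s := by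
    intro s hs
    have hs' : (0:ℝ) < s := hs
    have h1 : |(-(a/2) / s^2)| = a/(2*s^2) := by
      rw [abs_div, abs_neg, abs_of_pos (by positivity : (0:ℝ) < a/2),
        abs_of_pos (by positivity : (0:ℝ) < s^2)]
      ring
    have h2 : g (a/(2*s)) = g s := by
      simp only [hg]
      congr 1
      rw [show a/(2*(a/(2*s))) = s by field_simp]
      ring
    rw [h1, h2, smul_eq_mul]
  have hI2 : ∫ s in Ioi (0:ℝ), (a/(2*s^2)) * g s = ∫ u in Ioi (0:ℝ), g u := by
    calc ∫ s in Ioi (0:ℝ), (a/(2*s^2)) * g s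
        = ∫ s in Ioi (0:ℝ), |(-(a/2) / s^2)| • g (a/(2*s)) :=
          setIntegral_congr_fun measurableSet_Ioi fun s hs => (heq1 s hs).symm
      _ = ∫ u in Ioi (0:ℝ), g u := hsub1.symm
  -- integrability of the weighted integrand
  have hI2int : IntegrableOn (fun s => (a/(2*s^2)) * g s) (Ioi 0) := by
    have := (integrableOn_image_iff_integrableOn_abs_deriv_smul measurableSet_Ioi
      hd1 hinj1 g).mp (by rw [himg1]; exact hgi)
    exact this.congr_fun (fun s hs => heq1 s hs) measurableSet_Ioi
  -- second substitution: u = s - a/(2s)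
  have hd2 : ∀ s ∈ Ioi (0:ℝ), HasDerivWithinAt (fun s : ℝ => s - a/(2*s))
      (1 - (-(a/2) / s^2)) (Ioi 0) s :=
    fun s hs => (hasDerivWithinAt_id s _).sub (hd1 s hs)
  have hmono : StrictMonoOn (fun s : ℝ => s - a/(2*s)) (Ioi 0) := by
    apply strictMonoOn_of_deriv_pos (convex_Ioi 0)
    · exact continuousOn_id.sub (continuousOn_const.div
        (continuousOn_const.mul continuousOn_id) (fun s hs => by
          have hs' : (0:ℝ) < s := hs
          positivity))
    · intro s hs
      rw [interior_Ioi] at hs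
      have hs' : (0:ℝ) < s := hs
      have hder : HasDerivAt (fun s : ℝ => s - a/(2*s)) (1 - (-(a/2) / s^2)) s := by
        have h1 : HasDerivAt (fun s : ℝ => s⁻¹) (-(s^2)⁻¹) s := hasDerivAt_inv hs'.ne'
        have h2 := (hasDerivAt_id s).sub (h1.const_mul (a/2))
        have e1 : (fun s : ℝ => s - a/(2*s)) = (id - fun y => a / 2 * y⁻¹) := by
          funext t; simp only [Pi.sub_apply, id_eq]; ring
        have e2 : 1 - (-(a/2) / s^2) = 1 - a / 2 * -(s ^ 2)⁻¹ := by ring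
        rw [e1, e2]; exact h2
      rw [hder.deriv]
      have h0 : (0:ℝ) < a/2/s^2 := by positivity
      have h1 : -(a/2)/s^2 = -(a/2/s^2) := neg_div _ _
      rw [h1]; linarith
  have himg2 : (fun s : ℝ => s - a/(2*s)) '' Ioi 0 = univ := by
    apply eq_univ_of_forall
    intro u
    have hr2 : Real.sqrt (u^2 + 2*a) ^ 2 = u^2 + 2*a := Real.sq_sqrt (by positivity)
    have hrpos : 0 < Real.sqrt (u^2 + 2*a) := Real.sqrt_pos.mpr (by positivity)
    set r := Real.sqrt (u^2 + 2*a)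
    have hru : -u < r := by
      rcases le_or_gt 0 u with h | h
      · linarith
      · refine lt_of_pow_lt_pow_left₀ 2 hrpos.le ?_
        rw [hr2]; nlinarith
    have hs0 : (0:ℝ) < (u + r)/2 := by linarith
    refine ⟨(u + r)/2, mem_Ioi.mpr hs0, ?_⟩
    show (u + r)/2 - a/(2*((u + r)/2)) = u
    have hur : (0:ℝ) < u + r := by linarith
    field_simp
    nlinarith [hr2]
  have hsub2 := integral_image_eq_integral_abs_deriv_smul measurableSet_Ioi hd2
    hmono.injOn (fun u => Real.exp (-u^2))
  rw [himg2, Measure.restrict_univ] at hsub2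
  have hgauss : ∫ x : ℝ, Real.exp (-x^2) = Real.sqrt π := by
    have h := integral_gaussian 1
    simp only [one_mul, neg_mul, div_one] at h
    simpa using h
  have heq2 : ∀ s ∈ Ioi (0:ℝ),
      |1 - (-(a/2) / s^2)| • Real.exp (-(s - a/(2*s))^2)
        = g s + (a/(2*s^2)) * g s := by
    intro s hs
    have hs' : (0:ℝ) < s := hs
    have h1 : |1 - (-(a/2) / s^2)| = 1 + a/(2*s^2) := by
      have h0 : (0:ℝ) < a/2/s^2 := by positivity
      have h1 : -(a/2)/s^2 = -(a/2/s^2) := neg_div _ _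
      rw [abs_of_pos (by rw [h1]; linarith)]
      rw [h1]; ring
    rw [h1, smul_eq_mul, hg]
    ring
  have hfinal : Real.sqrt π = (∫ s in Ioi (0:ℝ), g s) + ∫ s in Ioi (0:ℝ), (a/(2*s^2)) * g s := by
    rw [← hgauss, hsub2]
    rw [setIntegral_congr_fun measurableSet_Ioi heq2]
    exact integral_add hgi hI2int
  rw [hI2] at hfinal
  linarith

lemma subord {b : ℝ} (hb : 0 ≤ b) :
    Real.exp (-b) = (2 / Real.sqrt π) *
      ∫ s in Ioi (0:ℝ), Real.exp (-s^2) * Real.exp (-(1/(4*s^2)) * b^2) := by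
  have hπ : (0:ℝ) < Real.sqrt π := Real.sqrt_pos.mpr Real.pi_pos
  rcases eq_or_lt_of_le hb with rfl | hb'
  · simp only [neg_zero, Real.exp_zero, ne_eq, zero_pow, mul_zero]
    have h0 : ∫ s in Ioi (0:ℝ), Real.exp (-s^2) * Real.exp (-(1/(4*s^2)) * 0^2)
        = ∫ s in Ioi (0:ℝ), Real.exp (-1 * s^2) := by
      apply setIntegral_congr_fun measurableSet_Ioi
      intro s _
      norm_num
    rw [h0, integral_gaussian_Ioi]
    field_simp
  · have key : ∀ s ∈ Ioi (0:ℝ), Real.exp (-s^2) * Real.exp (-(1/(4*s^2)) * b^2)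
        = Real.exp (-b) * Real.exp (-(s - b/(2*s))^2) := by
      intro s hs
      have hs' : (0:ℝ) < s := hs
      rw [← Real.exp_add, ← Real.exp_add]
      congr 1
      have h1 : (s - b/(2*s))^2 = s^2 - b + b^2/(4*s^2) := by
        field_simp
        ring
      rw [h1]
      ring
    rw [setIntegral_congr_fun measurableSet_Ioi key, integral_const_mul, glasser hb']
    field_simp

open Finset in
lemma kernel_psd {d m : ℕ} (x : Fin m → EuclideanSpace ℝ (Fin d)) (v : Fin m → ℝ) :
    0 ≤ ∑ i, ∑ j, v i * v j * Real.exp (-(2*π) * ‖x i - x j‖) := by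
  have hπ2 : (0:ℝ) ≤ 2 / Real.sqrt π := by positivity
  set y : Fin m → EuclideanSpace ℝ (Fin d) := fun i => (2*π) • x i with hy
  have hnorm : ∀ i j, ‖y i - y j‖ = (2*π) * ‖x i - x j‖ := by
    intro i j
    rw [hy]
    show ‖(2*π) • x i - (2*π) • x j‖ = _
    rw [← smul_sub, norm_smul, Real.norm_eq_abs, abs_of_pos (by positivity)]
  set F : ℝ → ℝ → ℝ := fun b s => Real.exp (-s^2) * Real.exp (-(1/(4*s^2)) * b^2) with hF
  have hint : ∀ b : ℝ, IntegrableOn (F b) (Ioi 0) := by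
    intro b
    apply Integrable.mono' (g := fun s => Real.exp (-1 * s^2))
    · exact (integrable_exp_neg_mul_sq one_pos).integrableOn
    · apply ContinuousOn.aestronglyMeasurable _ measurableSet_Ioi
      apply ContinuousOn.mul
      · exact (Real.continuous_exp.comp (continuous_pow 2).neg).continuousOn
      · apply Real.continuous_exp.comp_continuousOn
        apply ContinuousOn.mul _ continuousOn_const
        apply ContinuousOn.neg
        exact continuousOn_const.div
          ((continuous_const.mul (continuous_pow 2)).continuousOn)
          (fun s hs => by
            have hs' : (0:ℝ) < s := hs
            positivity)
    · refine ae_of_all _ fun s => ?_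
      rw [Real.norm_eq_abs, abs_of_pos (by positivity), neg_one_mul]
      have h1 : Real.exp (-(1/(4*s^2)) * b^2) ≤ 1 :=
        Real.exp_le_one_iff.mpr (by
          have : (0:ℝ) ≤ (1/(4*s^2)) * b^2 := by positivity
          linarith)
      calc Real.exp (-s^2) * Real.exp (-(1/(4*s^2)) * b^2)
          ≤ Real.exp (-s^2) * 1 := by
            exact mul_le_mul_of_nonneg_left h1 (Real.exp_pos _).le
        _ = Real.exp (-s^2) := mul_one _
  have hQ : ∑ i, ∑ j, v i * v j * Real.exp (-(2*π) * ‖x i - x j‖)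
      = (2/Real.sqrt π) * ∫ s in Ioi (0:ℝ), ∑ i, ∑ j, v i * v j * F (‖y i - y j‖) s := by
    calc ∑ i, ∑ j, v i * v j * Real.exp (-(2*π) * ‖x i - x j‖)
        = ∑ i, ∑ j, (2/Real.sqrt π) * ∫ s in Ioi (0:ℝ), v i * v j * F (‖y i - y j‖) s := by
          refine Finset.sum_congr rfl fun i _ => Finset.sum_congr rfl fun j _ => ?_
          rw [show -(2*π) * ‖x i - x j‖ = -‖y i - y j‖ by rw [hnorm]; ring,
            subord (norm_nonneg _), integral_const_mul]
          ring
      _ = (2/Real.sqrt π) * ∑ i, ∑ j, ∫ s in Ioi (0:ℝ), v i * v j * F (‖y i - y j‖) s := by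
          rw [Finset.mul_sum]
          exact Finset.sum_congr rfl fun i _ => by rw [Finset.mul_sum]
      _ = (2/Real.sqrt π) * ∫ s in Ioi (0:ℝ), ∑ i, ∑ j, v i * v j * F (‖y i - y j‖) s := by
          congr 1
          rw [integral_finset_sum _ (fun i _ => integrable_finset_sum _
            (fun j _ => ((hint (‖y i - y j‖)).const_mul _)))]
          exact Finset.sum_congr rfl fun i _ => by
            rw [integral_finset_sum _ (fun j _ => ((hint (‖y i - y j‖)).const_mul _))]
  rw [hQ]
  apply mul_nonneg hπ2
  apply setIntegral_nonneg measurableSet_Ioi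
  intro s hs
  have hg := gauss_psd (1/(4*s^2)) (by positivity) y v
  calc (0:ℝ) ≤ Real.exp (-s^2) * ∑ i, ∑ j, v i * v j * Real.exp (-(1/(4*s^2)) * ‖y i - y j‖^2) :=
        mul_nonneg (Real.exp_pos _).le hg
    _ = ∑ i, ∑ j, v i * v j * F (‖y i - y j‖) s := by
        rw [Finset.mul_sum]
        refine Finset.sum_congr rfl fun i _ => ?_
        rw [Finset.mul_sum]
        refine Finset.sum_congr rfl fun j _ => ?_
        rw [hF]
        ring

open Matrix in
lemma shifted_posDef (d m : ℕ) (α : ℝ) (hα : 0 < α)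
    (x : Fin m → EuclideanSpace ℝ (Fin d)) :
    Matrix.PosDef (α • (1 : Matrix (Fin m) (Fin m) ℝ) + kernelMatrix d m x) := by
  rw [Matrix.posDef_iff_dotProduct_mulVec]
  constructor
  · -- Hermitian
    apply Matrix.IsHermitian.ext
    intro i j
    simp only [Matrix.add_apply, Matrix.smul_apply, Matrix.one_apply, kernelMatrix,
      Matrix.of_apply, star_trivial]
    rw [norm_sub_rev]
    congr 1
    by_cases h : i = j
    · simp [h]
    · simp [h, Ne.symm h]
  · intro v hv
    have h1 : dotProduct (star v) ((α • (1 : Matrix (Fin m) (Fin m) ℝ) + kernelMatrix d m x) *ᵥ v)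
        = α * dotProduct v v + dotProduct v ((kernelMatrix d m x) *ᵥ v) := by
      rw [star_trivial, Matrix.add_mulVec, Matrix.smul_mulVec, Matrix.one_mulVec,
        dotProduct_add, dotProduct_smul]
      rfl
    rw [h1]
    have h2 : 0 < dotProduct v v := by
      rcases (dotProduct_self_eq_zero (v := v)).ne.mpr hv with h
      have : 0 ≤ dotProduct v v := Finset.sum_nonneg fun i _ => mul_self_nonneg _
      exact lt_of_le_of_ne this (Ne.symm h)
    have h3 : 0 ≤ dotProduct v ((kernelMatrix d m x) *ᵥ v) := by
      have := kernel_psd x v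
      calc (0:ℝ) ≤ ∑ i, ∑ j, v i * v j * Real.exp (-(2*π) * ‖x i - x j‖) := this
        _ = dotProduct v ((kernelMatrix d m x) *ᵥ v) := by
          simp only [dotProduct, Matrix.mulVec, kernelMatrix, Matrix.of_apply]
          refine Finset.sum_congr rfl fun i _ => ?_
          rw [Finset.mul_sum]
          exact Finset.sum_congr rfl fun j _ => by ring
    nlinarith

/-- for fixed `α > 0`, the map sending a data set
`D = ((x¹, …, x^m), 𝕐)` to the solution `u_𝕏 = (αI + M_𝕏)⁻¹ M_𝕏 𝕐` of the finite
linear system is well defined (the matrix `αI + M_𝕏` is always invertible) and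
continuous on all of `(ℝ^d)^m × ℝ^{m×n}`. -/
theorem finite_system_solution_continuous (d m n : ℕ) (α : ℝ) (hα : 0 < α) :
    (∀ x : Fin m → EuclideanSpace ℝ (Fin d),
      IsUnit (α • (1 : Matrix (Fin m) (Fin m) ℝ) + kernelMatrix d m x)) ∧
    Continuous (fun p : (Fin m → EuclideanSpace ℝ (Fin d)) × Matrix (Fin m) (Fin n) ℝ =>
      (α • (1 : Matrix (Fin m) (Fin m) ℝ) + kernelMatrix d m p.1)⁻¹ *
        (kernelMatrix d m p.1 * p.2)) := by
  refine ⟨fun x => (shifted_posDef d m α hα x).isUnit, ?_⟩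
  have hMcont : Continuous fun x : Fin m → EuclideanSpace ℝ (Fin d) => kernelMatrix d m x :=
    continuous_matrix fun i j => Real.continuous_exp.comp
      (continuous_const.mul (((continuous_apply i).sub (continuous_apply j)).norm))
  set A : (Fin m → EuclideanSpace ℝ (Fin d)) × Matrix (Fin m) (Fin n) ℝ →
      Matrix (Fin m) (Fin m) ℝ :=
    fun p => α • (1 : Matrix (Fin m) (Fin m) ℝ) + kernelMatrix d m p.1 with hA
  have hAcont : Continuous A := continuous_const.add (hMcont.comp continuous_fst)
  have hdet : Continuous fun p => (A p).det := hAcont.matrix_det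
  have hdetne : ∀ p, (A p).det ≠ 0 := fun p => (shifted_posDef d m α hα p.1).det_pos.ne'
  have hkey : ∀ p : (Fin m → EuclideanSpace ℝ (Fin d)) × Matrix (Fin m) (Fin n) ℝ,
      (A p)⁻¹ * (kernelMatrix d m p.1 * p.2)
      = (((A p).det)⁻¹ • (A p).adjugate) * (kernelMatrix d m p.1 * p.2) := by
    intro p
    rw [Matrix.inv_def, Ring.inverse_eq_inv]
  have hcont : Continuous fun p : (Fin m → EuclideanSpace ℝ (Fin d)) × Matrix (Fin m) (Fin n) ℝ =>
      (((A p).det)⁻¹ • (A p).adjugate) * (kernelMatrix d m p.1 * p.2) :=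
    ((hdet.inv₀ hdetne).smul hAcont.matrix_adjugate).matrix_mul
      ((hMcont.comp continuous_fst).matrix_mul continuous_snd)
  exact hcont.congr fun p => (hkey p).symm
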